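/- Let m be a positive integer, d > 0 and define s_m(x) = √(1 + x²/m)·t(m) for x ∈ [0,d) and s_m(x) = t(m) for x ≥ d. Let c_m denote the corresponding coverage probability function (with b ≡ 0, ρ = 0) and define ν_m = c_m(γ=0) − (1−α). Then 0 ≤ ν_m ≤ c(γ=0; b≡0, s ≡ √(1+d²/m)·t(m), ρ=0) − (1−α), and ν_m → 0 as m → ∞. -/

import Mathlib

open MeasureTheory Real Set Filter

/-- Standard normal probability density function. -/
noncomputable def stdPDF (u : ℝ) : ℝ := (Real.sqrt (2 * Real.pi))⁻¹ * Real.exp (-u ^ 2 / 2)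

/-- Standard normal cumulative distribution function. -/
noncomputable def stdCDF (u : ℝ) : ℝ := ∫ t in Set.Iic u, stdPDF t

/-- Density of the chi-squared distribution with `m` degrees of freedom. -/
noncomputable def chisqPDF (m : ℕ) (q : ℝ) : ℝ :=
  if 0 < q then q ^ ((m : ℝ) / 2 - 1) * Real.exp (-q / 2) /
    (2 ^ ((m : ℝ) / 2) * Real.Gamma ((m : ℝ) / 2)) else 0

/-- Density of `W = sqrt(Q/m)` where `Q ~ χ²_m`. -/
noncomputable def fW (m : ℕ) (w : ℝ) : ℝ := 2 * m * w * chisqPDF m (m * w ^ 2)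

/-- Density of the Student t distribution with `m` degrees of freedom. -/
noncomputable def tPDF (m : ℕ) (x : ℝ) : ℝ :=
  Real.Gamma (((m : ℝ) + 1) / 2) / (Real.sqrt (m * Real.pi) * Real.Gamma ((m : ℝ) / 2)) *
    (1 + x ^ 2 / m) ^ (-(((m : ℝ) + 1) / 2))

/-- Coverage probability `c(γ; b ≡ 0, s, ρ = 0)`, i.e.
`P(|G| ≤ W s(|H|/W))` with `G ~ N(0,1)`, `H ~ N(γ,1)`, `W = σ̂/σ` independent. -/
noncomputable def cov0 (m : ℕ) (s : ℝ → ℝ) (γ : ℝ) : ℝ :=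
  ∫ w in Set.Ioi (0 : ℝ),
    (∫ h : ℝ, (2 * stdCDF (w * s (|h| / w)) - 1) * stdPDF (h - γ)) * fW m w

/-- The minimizing half-width function `s_{λ(m)}`. -/
noncomputable def smin (m : ℕ) (tm d x : ℝ) : ℝ :=
  if x < d then Real.sqrt (1 + x ^ 2 / m) * tm else tm




lemma stdPDF_pos (u : ℝ) : 0 < stdPDF u := by
  unfold stdPDF
  positivity

lemma stdPDF_le (u : ℝ) : stdPDF u ≤ (Real.sqrt (2 * Real.pi))⁻¹ := by
  unfold stdPDF
  nth_rewrite 2 [show (Real.sqrt (2*Real.pi))⁻¹ = (Real.sqrt (2*Real.pi))⁻¹ * 1 by ring]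
  have h1 : Real.exp (-u ^ 2 / 2) ≤ 1 := by
    rw [Real.exp_le_one_iff]; nlinarith [sq_nonneg u]
  have h2 : (0:ℝ) ≤ (Real.sqrt (2*Real.pi))⁻¹ := by positivity
  nlinarith [Real.exp_pos (-u^2/2)]

lemma stdPDF_eq (u : ℝ) : stdPDF u = (Real.sqrt (2 * Real.pi))⁻¹ * Real.exp (-(1/2) * u ^ 2) := by
  unfold stdPDF; ring_nf

lemma integrable_stdPDF : Integrable stdPDF := by
  have : Integrable (fun u : ℝ => Real.exp (-(1/2) * u ^ 2)) := integrable_exp_neg_mul_sq (by norm_num)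
  have h := this.const_mul (Real.sqrt (2 * Real.pi))⁻¹
  refine h.congr (Filter.Eventually.of_forall fun u => ?_)
  rw [stdPDF_eq]

lemma integral_stdPDF : ∫ u, stdPDF u = 1 := by
  simp_rw [stdPDF_eq]
  rw [integral_const_mul, integral_gaussian]
  rw [show Real.pi / (1/2) = 2 * Real.pi by ring]
  rw [inv_mul_cancel₀ (by positivity)]

lemma stdPDF_neg (u : ℝ) : stdPDF (-u) = stdPDF u := by unfold stdPDF; ring_nf

lemma measurable_stdPDF : Measurable stdPDF := by
  unfold stdPDF; fun_prop

lemma stdCDF_mono : Monotone stdCDF := by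
  intro a b hab
  exact setIntegral_mono_set integrable_stdPDF.integrableOn
    (Filter.Eventually.of_forall fun x => (stdPDF_pos x).le)
    (Filter.Eventually.of_forall (Iic_subset_Iic.2 hab))

lemma measurable_stdCDF : Measurable stdCDF := stdCDF_mono.measurable

lemma stdCDF_nonneg (u : ℝ) : 0 ≤ stdCDF u :=
  setIntegral_nonneg measurableSet_Iic fun x _ => (stdPDF_pos x).le

lemma stdCDF_le_one (u : ℝ) : stdCDF u ≤ 1 := by
  rw [← integral_stdPDF]
  exact setIntegral_le_integral integrable_stdPDF
    (Filter.Eventually.of_forall fun x => (stdPDF_pos x).le)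

lemma stdCDF_neg_eq (a : ℝ) : stdCDF (-a) = 1 - stdCDF a := by
  have h1 : stdCDF (-a) = ∫ x in Ioi a, stdPDF x := by
    unfold stdCDF
    rw [show (∫ t in Iic (-a), stdPDF t) = ∫ t in Iic (-a), stdPDF (-t) from
      setIntegral_congr_fun measurableSet_Iic fun x _ => (stdPDF_neg x).symm,
      integral_comp_neg_Iic, neg_neg]
  have h2 : stdCDF a + stdCDF (-a) = 1 := by
    rw [h1, ← integral_stdPDF]
    unfold stdCDF
    rw [← setIntegral_union (Iic_disjoint_Ioi le_rfl) measurableSet_Ioi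
      integrable_stdPDF.integrableOn integrable_stdPDF.integrableOn, Iic_union_Ioi]
    simp [Measure.restrict_univ]
  linarith

lemma stdCDF_sub_eq (a b : ℝ) (hab : a ≤ b) :
    stdCDF b - stdCDF a = ∫ x in Ioo a b, stdPDF x := by
  unfold stdCDF
  rw [intervalIntegral.integral_Iic_sub_Iic integrable_stdPDF.integrableOn integrable_stdPDF.integrableOn,
    intervalIntegral.integral_of_le hab, integral_Ioc_eq_integral_Ioo]

lemma two_stdCDF_sub_one (a : ℝ) (ha : 0 ≤ a) :
    2 * stdCDF a - 1 = ∫ x in Ioo (-a) a, stdPDF x := by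
  rw [← stdCDF_sub_eq (-a) a (by linarith), stdCDF_neg_eq]; ring



noncomputable def A0 (m : ℕ) : ℝ :=
  2 * (m:ℝ) ^ ((m:ℝ)/2) / (2 ^ ((m:ℝ)/2) * Real.Gamma ((m:ℝ)/2))

lemma Igam (q b : ℝ) (hq : -1 < q) (hb : 0 < b) :
    ∫ w in Ioi (0:ℝ), w ^ q * Real.exp (-b * w ^ 2) =
      b ^ (-(q+1)/2) * (1/2) * Real.Gamma ((q+1)/2) := by
  have h := integral_rpow_mul_exp_neg_mul_rpow (p := 2) (q := q) (b := b) two_pos hq hb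
  rw [show ∫ w in Ioi (0:ℝ), w ^ q * Real.exp (-b * w ^ 2)
      = ∫ x in Ioi (0:ℝ), x ^ q * Real.exp (-b * x ^ (2:ℝ)) from
    setIntegral_congr_fun measurableSet_Ioi fun x hx => by
      rw [show x ^ (2:ℝ) = x ^ 2 by
        rw [show (2:ℝ) = ((2:ℕ):ℝ) by norm_num, Real.rpow_natCast]], h]

lemma Igam_int (q b : ℝ) (hq : -1 < q) (hb : 0 < b) :
    IntegrableOn (fun w : ℝ => w ^ q * Real.exp (-b * w ^ 2)) (Ioi 0) := by
  have h := integrableOn_rpow_mul_exp_neg_mul_rpow (p := 2) (s := q) (b := b) hq two_pos hb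
  refine IntegrableOn.congr_fun h (fun x hx => ?_) measurableSet_Ioi
  rw [show x ^ (2:ℝ) = x ^ 2 by
    rw [show (2:ℝ) = ((2:ℕ):ℝ) by norm_num, Real.rpow_natCast]]

lemma Gamma_mid_le {a b : ℝ} (ha : 0 < a) (hb : 0 < b) :
    Real.Gamma ((a+b)/2) ≤ Real.sqrt (Real.Gamma a * Real.Gamma b) := by
  have c := Real.convexOn_log_Gamma.2 (mem_Ioi.mpr ha) (mem_Ioi.mpr hb)
    (by norm_num : (0:ℝ) ≤ 1/2) (by norm_num : (0:ℝ) ≤ 1/2) (by norm_num)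
  simp only [smul_eq_mul, Function.comp_apply] at c
  have hmid : 0 < (a+b)/2 := by linarith
  have h1 : Real.Gamma ((a+b)/2) = Real.exp (Real.log (Real.Gamma ((a+b)/2))) :=
    (Real.exp_log (Real.Gamma_pos_of_pos hmid)).symm
  have h2 : (1/2 : ℝ) * a + (1/2) * b = (a+b)/2 := by ring
  rw [h2] at c
  rw [h1]
  calc Real.exp (Real.log (Real.Gamma ((a+b)/2)))
      ≤ Real.exp (1/2 * Real.log (Real.Gamma a) + 1/2 * Real.log (Real.Gamma b)) :=
        Real.exp_le_exp.mpr c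
    _ = Real.sqrt (Real.Gamma a * Real.Gamma b) := by
        rw [show (1/2:ℝ) * Real.log (Real.Gamma a) + 1/2 * Real.log (Real.Gamma b)
            = (Real.log (Real.Gamma a) + Real.log (Real.Gamma b))/2 by ring]
        rw [← Real.log_mul (Real.Gamma_pos_of_pos ha).ne' (Real.Gamma_pos_of_pos hb).ne']
        rw [show Real.Gamma a * Real.Gamma b
            = Real.exp (Real.log (Real.Gamma a * Real.Gamma b)) from
          (Real.exp_log (by positivity)).symm]
        set z := Real.log (Real.Gamma a * Real.Gamma b)
        rw [Real.log_exp, show Real.exp z = (Real.exp (z/2))^2 by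
          rw [sq, ← Real.exp_add]; congr 1; ring, Real.sqrt_sq (Real.exp_pos _).le]

lemma Gamma_ratio_le (x : ℝ) (hx : 0 < x) :
    Real.Gamma (x + 1/2) ≤ Real.sqrt x * Real.Gamma x := by
  have h := Gamma_mid_le hx (by linarith : (0:ℝ) < x + 1)
  rw [show (x + (x+1))/2 = x + 1/2 by ring, Real.Gamma_add_one hx.ne'] at h
  calc Real.Gamma (x + 1/2) ≤ Real.sqrt (Real.Gamma x * (x * Real.Gamma x)) := h
    _ = Real.sqrt x * Real.Gamma x := by
        rw [show Real.Gamma x * (x * Real.Gamma x) = x * (Real.Gamma x)^2 by ring,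
          Real.sqrt_mul hx.le, Real.sqrt_sq (Real.Gamma_pos_of_pos hx).le]

lemma Gamma_ratio_ge (x : ℝ) (hx : 1/2 < x) :
    Real.sqrt (x - 1/2) * Real.Gamma x ≤ Real.Gamma (x + 1/2) := by
  have hx2 : 0 < x - 1/2 := by linarith
  have h1 := Gamma_ratio_le (x - 1/2) hx2
  rw [show x - 1/2 + 1/2 = x by ring] at h1
  have h2 : Real.Gamma (x + 1/2) = (x - 1/2) * Real.Gamma (x - 1/2) := by
    rw [show x + 1/2 = (x - 1/2) + 1 by ring, Real.Gamma_add_one hx2.ne']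
  rw [h2]
  calc Real.sqrt (x - 1/2) * Real.Gamma x
      ≤ Real.sqrt (x - 1/2) * (Real.sqrt (x - 1/2) * Real.Gamma (x - 1/2)) := by
        have := Real.sqrt_nonneg (x - 1/2); nlinarith
    _ = (x - 1/2) * Real.Gamma (x - 1/2) := by
        rw [← mul_assoc, Real.mul_self_sqrt hx2.le]

section fWfacts
variable {m : ℕ}


lemma mr_pos (hm : 0 < m) : (0:ℝ) < (m:ℝ) := by exact_mod_cast hm

lemma Gam_pos (hm : 0 < m) : 0 < Real.Gamma ((m:ℝ)/2) := by
  have := mr_pos hm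
  exact Real.Gamma_pos_of_pos (by positivity)

lemma A0_pos (hm : 0 < m) : 0 < A0 m := by
  have h1 := Gam_pos hm
  have h2 := mr_pos hm
  unfold A0
  positivity

lemma fW_eq (hm : 0 < m) {w : ℝ} (hw : 0 < w) :
    fW m w = A0 m * w ^ ((m:ℝ) - 1) * Real.exp (-((m:ℝ)/2) * w ^ 2) := by
  have hmr : (0:ℝ) < (m:ℝ) := mr_pos hm
  unfold fW chisqPDF A0
  rw [if_pos (by positivity)]
  have h1 : ((m:ℝ) * w ^ 2) ^ ((m:ℝ)/2 - 1)
      = (m:ℝ) ^ ((m:ℝ)/2 - 1) * w ^ ((m:ℝ) - 2) := by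
    rw [Real.mul_rpow hmr.le (by positivity), show w ^ 2 = w ^ (2:ℝ) by
        rw [show (2:ℝ) = ((2:ℕ):ℝ) by norm_num, Real.rpow_natCast],
      ← Real.rpow_mul hw.le]
    congr 2
    ring
  have h2 : (m:ℝ) * (m:ℝ) ^ ((m:ℝ)/2 - 1) = (m:ℝ) ^ ((m:ℝ)/2) := by
    nth_rewrite 1 [show (m:ℝ) = (m:ℝ) ^ (1:ℝ) by rw [Real.rpow_one]]
    rw [← Real.rpow_add hmr]
    congr 1; ring
  have h3 : w * w ^ ((m:ℝ) - 2) = w ^ ((m:ℝ) - 1) := by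
    nth_rewrite 1 [show w = w ^ (1:ℝ) by rw [Real.rpow_one]]
    rw [← Real.rpow_add hw]
    congr 1; ring
  rw [h1, show -((m:ℝ) * w ^ 2)/2 = -((m:ℝ)/2) * w ^ 2 by ring, div_eq_mul_inv, div_eq_mul_inv]
  calc 2 * (m:ℝ) * w * ((m:ℝ) ^ ((m:ℝ)/2 - 1) * w ^ ((m:ℝ) - 2) *
        Real.exp (-((m:ℝ)/2) * w ^ 2) * (2 ^ ((m:ℝ)/2) * Real.Gamma ((m:ℝ)/2))⁻¹)
      = ((m:ℝ) * (m:ℝ) ^ ((m:ℝ)/2 - 1)) * (w * w ^ ((m:ℝ) - 2)) *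
        (2 * (2 ^ ((m:ℝ)/2) * Real.Gamma ((m:ℝ)/2))⁻¹ * Real.exp (-((m:ℝ)/2) * w ^ 2)) := by
        ring
    _ = _ := by rw [h2, h3]; ring

lemma fW_nonneg (hm : 0 < m) (w : ℝ) (hw : 0 ≤ w) : 0 ≤ fW m w := by
  rcases eq_or_lt_of_le hw with h | h
  · simp [fW, ← h]
  · rw [fW_eq hm h]
    have := A0_pos hm
    positivity

lemma integrable_fW (hm : 0 < m) : IntegrableOn (fW m) (Ioi 0) := by
  have hmr : (0:ℝ) < (m:ℝ) := mr_pos hm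
  have h := (Igam_int ((m:ℝ) - 1) ((m:ℝ)/2) (by linarith) (by positivity)).const_mul (A0 m)
  refine IntegrableOn.congr_fun h (fun w hw => ?_) measurableSet_Ioi
  rw [fW_eq hm hw]; ring

lemma mhalf_rpow (hm : 0 < m) (y : ℝ) :
    ((m:ℝ)/2) ^ y = (m:ℝ) ^ y / 2 ^ y := by
  have hmr : (0:ℝ) < (m:ℝ) := mr_pos hm
  rw [Real.div_rpow hmr.le (by norm_num)]

lemma integral_fW (hm : 0 < m) : ∫ w in Ioi (0:ℝ), fW m w = 1 := by
  have hmr : (0:ℝ) < (m:ℝ) := mr_pos hm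
  have hG := Gam_pos hm
  rw [setIntegral_congr_fun measurableSet_Ioi (fun w hw => fW_eq hm hw)]
  simp_rw [mul_assoc, integral_const_mul]
  rw [Igam ((m:ℝ) - 1) ((m:ℝ)/2) (by linarith) (by positivity),
    show ((m:ℝ) - 1 + 1) = (m:ℝ) by ring]
  rw [show (-(m:ℝ)/2) = -((m:ℝ)/2) by ring, Real.rpow_neg (by positivity), mhalf_rpow hm]
  unfold A0
  have hne1 : (m:ℝ) ^ ((m:ℝ)/2) ≠ 0 := by positivity
  have hne2 : (2:ℝ) ^ ((m:ℝ)/2) ≠ 0 := by positivity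
  field_simp

lemma integrable_w_fW (hm : 0 < m) : IntegrableOn (fun w => w * fW m w) (Ioi 0) := by
  have hmr : (0:ℝ) < (m:ℝ) := mr_pos hm
  have h := (Igam_int ((m:ℝ)) ((m:ℝ)/2) (by linarith) (by positivity)).const_mul (A0 m)
  refine IntegrableOn.congr_fun h (fun w hw => ?_) measurableSet_Ioi
  rw [fW_eq hm hw]
  have h3 : w * w ^ ((m:ℝ) - 1) = w ^ ((m:ℝ)) := by
    nth_rewrite 1 [show w = w ^ (1:ℝ) by rw [Real.rpow_one]]
    rw [← Real.rpow_add hw]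
    congr 1; ring
  rw [← h3]; ring

lemma integral_w_fW_le (hm : 0 < m) : ∫ w in Ioi (0:ℝ), w * fW m w ≤ 1 := by
  have hmr : (0:ℝ) < (m:ℝ) := mr_pos hm
  have hG := Gam_pos hm
  have hstep : ∫ w in Ioi (0:ℝ), w * fW m w
      = A0 m * (((m:ℝ)/2) ^ (-((m:ℝ)+1)/2) * (1/2) * Real.Gamma (((m:ℝ)+1)/2)) := by
    rw [setIntegral_congr_fun measurableSet_Ioi (fun w hw => ?_), integral_const_mul,
      Igam ((m:ℝ)) ((m:ℝ)/2) (by linarith) (by positivity)]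
    rotate_left
    · rw [fW_eq hm hw]
      have h3 : w * w ^ ((m:ℝ) - 1) = w ^ ((m:ℝ)) := by
        nth_rewrite 1 [show w = w ^ (1:ℝ) by rw [Real.rpow_one]]
        rw [← Real.rpow_add hw]
        congr 1; ring
      show w * (A0 m * w ^ ((m:ℝ)-1) * Real.exp (-((m:ℝ)/2) * w^2))
        = A0 m * (w ^ ((m:ℝ)) * Real.exp (-((m:ℝ)/2) * w^2))
      rw [← h3]
      ring
  rw [hstep]
  -- Γ((m+1)/2) ≤ √(m/2) Γ(m/2)
  have hratio : Real.Gamma (((m:ℝ)+1)/2) ≤ Real.sqrt ((m:ℝ)/2) * Real.Gamma ((m:ℝ)/2) := by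
    have := Gamma_ratio_le ((m:ℝ)/2) (by positivity)
    rwa [show (m:ℝ)/2 + 1/2 = ((m:ℝ)+1)/2 by ring] at this
  have hA := A0_pos hm
  have hpow : (0:ℝ) < ((m:ℝ)/2) ^ (-((m:ℝ)+1)/2) := Real.rpow_pos_of_pos (by positivity) _
  calc A0 m * (((m:ℝ)/2) ^ (-((m:ℝ)+1)/2) * (1/2) * Real.Gamma (((m:ℝ)+1)/2))
      ≤ A0 m * (((m:ℝ)/2) ^ (-((m:ℝ)+1)/2) * (1/2) *
          (Real.sqrt ((m:ℝ)/2) * Real.Gamma ((m:ℝ)/2))) := by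
        apply mul_le_mul_of_nonneg_left _ hA.le
        apply mul_le_mul_of_nonneg_left hratio (by positivity)
    _ = 1 := by
        have hsq : Real.sqrt ((m:ℝ)/2) = ((m:ℝ)/2) ^ (1/2 : ℝ) :=
          Real.sqrt_eq_rpow _
        rw [hsq]
        unfold A0
        rw [show 2 * (m:ℝ) ^ ((m:ℝ)/2) / (2 ^ ((m:ℝ)/2) * Real.Gamma ((m:ℝ)/2))
            = 2 * ((m:ℝ)/2) ^ ((m:ℝ)/2) / Real.Gamma ((m:ℝ)/2) by
          rw [mhalf_rpow hm]; field_simp]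
        have hh : ((m:ℝ)/2) ^ ((m:ℝ)/2) * (((m:ℝ)/2) ^ (-((m:ℝ)+1)/2) *
            ((m:ℝ)/2) ^ (1/2:ℝ)) = 1 := by
          rw [← Real.rpow_add (by positivity), ← Real.rpow_add (by positivity)]
          rw [show (m:ℝ)/2 + (-((m:ℝ)+1)/2 + 1/2) = 0 by ring, Real.rpow_zero]
        have hexpand : 2 * ((m:ℝ)/2) ^ ((m:ℝ)/2) / Real.Gamma ((m:ℝ)/2) *
            (((m:ℝ)/2) ^ (-((m:ℝ)+1)/2) * (1/2) *
              (((m:ℝ)/2) ^ (1/2:ℝ) * Real.Gamma ((m:ℝ)/2)))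
            = (((m:ℝ)/2) ^ ((m:ℝ)/2) * (((m:ℝ)/2) ^ (-((m:ℝ)+1)/2) *
              ((m:ℝ)/2) ^ (1/2:ℝ))) * (Real.Gamma ((m:ℝ)/2) / Real.Gamma ((m:ℝ)/2)) := by
          ring
        rw [hexpand, hh, div_self hG.ne', mul_one]
end fWfacts





lemma measurable_chisqPDF (m : ℕ) : Measurable (chisqPDF m) := by
  unfold chisqPDF
  apply Measurable.ite (measurableSet_lt measurable_const measurable_id) _ measurable_const
  fun_prop

lemma measurable_fW (m : ℕ) : Measurable (fW m) := by
  unfold fW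
  exact (measurable_const.mul measurable_id).mul
    ((measurable_chisqPDF m).comp (by fun_prop))

lemma two_stdCDF_scaled (w t : ℝ) (hw : 0 < w) (ht : 0 ≤ t) :
    2 * stdCDF (w * t) - 1 = ∫ x in Ioo (-t) t, w * stdPDF (w * x) := by
  rw [two_stdCDF_sub_one (w*t) (by positivity)]
  have h1 : ∫ x in Ioo (-t) t, w * stdPDF (w * x)
      = ∫ x in (-t)..t, w * stdPDF (w * x) := by
    rw [intervalIntegral.integral_of_le (by linarith), integral_Ioc_eq_integral_Ioo]
  have h2 : ∫ x in Ioo (-(w*t)) (w*t), stdPDF x = ∫ x in (-(w*t))..(w*t), stdPDF x := by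
    rw [intervalIntegral.integral_of_le (by nlinarith), integral_Ioc_eq_integral_Ioo]
  rw [h1, h2, intervalIntegral.integral_const_mul,
    intervalIntegral.integral_comp_mul_left (fun y => stdPDF y) hw.ne']
  rw [smul_eq_mul, ← mul_assoc, mul_inv_cancel₀ hw.ne', one_mul,
    show w * -t = -(w*t) by ring]

lemma inner_w_integral {m : ℕ} (hm : 0 < m) (x : ℝ) :
    ∫ w in Ioi (0:ℝ), (w * stdPDF (w * x)) * fW m w = tPDF m x := by
  have hmr := mr_pos hm
  have hG := Gam_pos hm
  have hb : (0:ℝ) < (x^2 + (m:ℝ))/2 := by positivity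
  have hstep : ∀ w ∈ Ioi (0:ℝ), (w * stdPDF (w * x)) * fW m w
      = ((Real.sqrt (2*Real.pi))⁻¹ * A0 m) *
        (w ^ ((m:ℝ)) * Real.exp (-((x^2 + (m:ℝ))/2) * w ^ 2)) := by
    intro w hw
    rw [mem_Ioi] at hw
    rw [fW_eq hm hw]
    unfold stdPDF
    have h3 : w * w ^ ((m:ℝ) - 1) = w ^ ((m:ℝ)) := by
      nth_rewrite 1 [show w = w ^ (1:ℝ) by rw [Real.rpow_one]]
      rw [← Real.rpow_add hw]; congr 1; ring
    rw [← h3]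
    have hexp : Real.exp (-(w*x)^2/2) * Real.exp (-((m:ℝ)/2) * w^2)
        = Real.exp (-((x^2 + (m:ℝ))/2) * w^2) := by
      rw [← Real.exp_add]; congr 1; ring
    rw [← hexp]; ring
  rw [setIntegral_congr_fun measurableSet_Ioi hstep, integral_const_mul,
    Igam ((m:ℝ)) ((x^2 + (m:ℝ))/2) (by linarith) hb]
  -- now pure algebra
  unfold tPDF A0
  have hP : (0:ℝ) < 1 + x^2/(m:ℝ) := by positivity
  have hBP : (x^2 + (m:ℝ))/2 = ((m:ℝ)/2) * (1 + x^2/(m:ℝ)) := by field_simp; ring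
  set E : ℝ := -((m:ℝ)+1)/2 with hE
  have hE2 : -(((m:ℝ)+1)/2) = E := by rw [hE]; ring
  rw [hE2, hBP, Real.mul_rpow (by positivity) hP.le, mhalf_rpow hm]
  -- goal: c0 * A0expr * (m^E/2^E * P^E * (1/2) * Γ((m+1)/2)) = Γ((m+1)/2)/(√(mπ) Γ(m/2)) * P^E
  have key : (Real.sqrt (2*Real.pi))⁻¹ *
      (2 * (m:ℝ) ^ ((m:ℝ)/2) / (2 ^ ((m:ℝ)/2) * Real.Gamma ((m:ℝ)/2))) *
      ((m:ℝ) ^ E / 2 ^ E) * (1/2)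
      = 1 / (Real.sqrt ((m:ℝ) * Real.pi) * Real.Gamma ((m:ℝ)/2)) := by
    have hs2 : Real.sqrt (2*Real.pi) = 2 ^ (1/2:ℝ) * Real.pi ^ (1/2:ℝ) := by
      rw [Real.sqrt_mul (by norm_num), Real.sqrt_eq_rpow, Real.sqrt_eq_rpow]
    have hsm : Real.sqrt ((m:ℝ)*Real.pi) = (m:ℝ) ^ (1/2:ℝ) * Real.pi ^ (1/2:ℝ) := by
      rw [Real.sqrt_mul hmr.le, Real.sqrt_eq_rpow, Real.sqrt_eq_rpow]
    have hmm : (m:ℝ) ^ ((m:ℝ)/2) * (m:ℝ) ^ E * (m:ℝ) ^ (1/2:ℝ) = 1 := by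
      rw [← Real.rpow_add hmr, ← Real.rpow_add hmr,
        show (m:ℝ)/2 + E + 1/2 = 0 by rw [hE]; ring, Real.rpow_zero]
    have h22 : (2:ℝ) ^ (1/2:ℝ) * 2 ^ E * 2 ^ ((m:ℝ)/2) = 1 := by
      rw [← Real.rpow_add (by norm_num), ← Real.rpow_add (by norm_num),
        show (1:ℝ)/2 + E + (m:ℝ)/2 = 0 by rw [hE]; ring, Real.rpow_zero]
    rw [hs2, hsm]
    have n1 : ((m:ℝ):ℝ) ^ (1/2:ℝ) ≠ 0 := by positivity
    have n2 : (2:ℝ) ^ (1/2:ℝ) ≠ 0 := by positivity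
    have n3 : Real.pi ^ (1/2:ℝ) ≠ 0 := by positivity
    have n4 : (2:ℝ) ^ ((m:ℝ)/2) ≠ 0 := by positivity
    have n5 : (2:ℝ) ^ E ≠ 0 := by
      have : (0:ℝ) < 2 ^ E := Real.rpow_pos_of_pos (by norm_num) _
      exact this.ne'
    have n6 : Real.Gamma ((m:ℝ)/2) ≠ 0 := hG.ne'
    field_simp
    linear_combination hmm - h22
  calc (Real.sqrt (2*Real.pi))⁻¹ *
        (2 * (m:ℝ) ^ ((m:ℝ)/2) / (2 ^ ((m:ℝ)/2) * Real.Gamma ((m:ℝ)/2))) *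
        ((m:ℝ) ^ E / 2 ^ E * (1 + x^2/(m:ℝ)) ^ E * (1/2) * Real.Gamma (((m:ℝ)+1)/2))
      = ((Real.sqrt (2*Real.pi))⁻¹ *
        (2 * (m:ℝ) ^ ((m:ℝ)/2) / (2 ^ ((m:ℝ)/2) * Real.Gamma ((m:ℝ)/2))) *
        ((m:ℝ) ^ E / 2 ^ E) * (1/2)) * ((1 + x^2/(m:ℝ)) ^ E * Real.Gamma (((m:ℝ)+1)/2)) := by
        ring
    _ = _ := by rw [key]; ring


lemma two_stdCDF_mem (a : ℝ) (ha : 0 ≤ a) :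
    0 ≤ 2 * stdCDF a - 1 ∧ 2 * stdCDF a - 1 ≤ 1 := by
  constructor
  · rw [two_stdCDF_sub_one a ha]
    exact setIntegral_nonneg measurableSet_Ioo fun x _ => (stdPDF_pos x).le
  · have := stdCDF_le_one a; linarith

lemma continuous_stdPDF : Continuous stdPDF := by unfold stdPDF; fun_prop

lemma keyA {m : ℕ} (hm : 0 < m) {t : ℝ} (ht : 0 < t) :
    ∫ w in Ioi (0:ℝ), (2 * stdCDF (w * t) - 1) * fW m w = ∫ x in Ioo (-t) t, tPDF m x := by
  set f : ℝ → ℝ → ℝ := fun w x => (w * stdPDF (w * x)) * fW m w with hf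
  have hmeas : Measurable (Function.uncurry f) := by
    apply Measurable.mul
    · exact measurable_fst.mul
        (measurable_stdPDF.comp (measurable_fst.mul measurable_snd))
    · exact (measurable_fW m).comp measurable_fst
  have hslice : ∀ w : ℝ, IntegrableOn (fun x => f w x) (Ioo (-t) t) := by
    intro w
    have hc : Continuous fun x => f w x := by
      apply Continuous.mul _ continuous_const
      exact continuous_const.mul (continuous_stdPDF.comp (continuous_const.mul continuous_id))
    exact hc.integrableOn_Ioc.mono_set Ioo_subset_Ioc_self
  have hnorm_eq : ∀ w ∈ Ioi (0:ℝ),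
      (∫ x in Ioo (-t) t, f w x) = (2 * stdCDF (w*t) - 1) * fW m w := by
    intro w hw
    rw [two_stdCDF_scaled w t hw ht.le, ← integral_mul_const]
  have hInt : Integrable (Function.uncurry f)
      ((volume.restrict (Ioi 0)).prod (volume.restrict (Ioo (-t) t))) := by
    rw [integrable_prod_iff hmeas.aestronglyMeasurable]
    constructor
    · exact Filter.Eventually.of_forall fun w => hslice w
    · refine Integrable.mono (integrable_fW hm)
        (hmeas.norm.aestronglyMeasurable.integral_prod_right') ?_
      filter_upwards [ae_restrict_mem measurableSet_Ioi] with w hw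
      have hw' : 0 < w := hw
      have hnn : ∀ x : ℝ, 0 ≤ f w x := fun x =>
        mul_nonneg (mul_nonneg hw'.le (stdPDF_pos _).le) (fW_nonneg hm w hw'.le)
      have h1 : (∫ x in Ioo (-t) t, ‖f w x‖) = ∫ x in Ioo (-t) t, f w x := by
        refine integral_congr_ae (Filter.Eventually.of_forall fun x => ?_)
        exact Real.norm_of_nonneg (hnn x)
      show |∫ x in Ioo (-t) t, ‖f w x‖| ≤ ‖fW m w‖
      rw [h1, hnorm_eq w hw]
      have hmem := two_stdCDF_mem (w*t) (by positivity)
      have hfw := fW_nonneg hm w hw'.le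
      rw [abs_of_nonneg (mul_nonneg hmem.1 hfw), Real.norm_eq_abs, abs_of_nonneg hfw]
      nlinarith [hmem.1, hmem.2, hfw]
  calc ∫ w in Ioi (0:ℝ), (2 * stdCDF (w * t) - 1) * fW m w
      = ∫ w in Ioi (0:ℝ), ∫ x in Ioo (-t) t, f w x :=
        (setIntegral_congr_fun measurableSet_Ioi fun w hw => (hnorm_eq w hw).symm)
    _ = ∫ x in Ioo (-t) t, ∫ w in Ioi (0:ℝ), f w x := integral_integral_swap hInt
    _ = ∫ x in Ioo (-t) t, tPDF m x :=
        setIntegral_congr_fun measurableSet_Ioo fun x _ => inner_w_integral hm x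




section covlemmas
variable {m : ℕ} {s : ℝ → ℝ}

lemma Fmeas (hs : Measurable s) : Measurable (Function.uncurry fun w h =>
    (2 * stdCDF (w * s (|h| / w)) - 1) * stdPDF (h - (0:ℝ))) := by
  apply Measurable.mul
  · refine Measurable.sub ?_ measurable_const
    refine Measurable.mul measurable_const ?_
    exact measurable_stdCDF.comp
      (measurable_fst.mul (hs.comp (measurable_snd.abs.div measurable_fst)))
  · exact measurable_stdPDF.comp (measurable_snd.sub measurable_const)

lemma abs_two_cdf (u : ℝ) : |2 * stdCDF u - 1| ≤ 1 := by
  have h1 := stdCDF_nonneg u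
  have h2 := stdCDF_le_one u
  rw [abs_le]; constructor <;> linarith

lemma inner_integrable (hs : Measurable s) (w : ℝ) :
    Integrable (fun h => (2 * stdCDF (w * s (|h| / w)) - 1) * stdPDF (h - 0)) := by
  refine Integrable.mono (g := fun h => stdPDF (h - 0)) ?_ ?_
    (Filter.Eventually.of_forall fun h => ?_)
  · simpa only [sub_zero] using integrable_stdPDF
  · exact ((Fmeas hs).comp (measurable_const.prodMk measurable_id)).aestronglyMeasurable
  · rw [Real.norm_eq_abs, Real.norm_eq_abs, abs_mul,
      abs_of_pos (stdPDF_pos _)]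
    have := abs_two_cdf (w * s (|h|/w))
    nlinarith [stdPDF_pos (h - 0), abs_nonneg (2 * stdCDF (w * s (|h| / w)) - 1)]

lemma inner_bound (hs : Measurable s) (w : ℝ) :
    |∫ h, (2 * stdCDF (w * s (|h| / w)) - 1) * stdPDF (h - 0)| ≤ 1 := by
  have h1 : |∫ h, (2 * stdCDF (w * s (|h| / w)) - 1) * stdPDF (h - 0)|
      ≤ ∫ h, ‖(2 * stdCDF (w * s (|h| / w)) - 1) * stdPDF (h - 0)‖ := by
    simpa using norm_integral_le_integral_norm
      (fun h => (2 * stdCDF (w * s (|h| / w)) - 1) * stdPDF (h - 0))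
  refine h1.trans ?_
  have h2 : ∫ h, ‖(2 * stdCDF (w * s (|h| / w)) - 1) * stdPDF (h - 0)‖
      ≤ ∫ h, stdPDF (h - 0) := by
    refine integral_mono (inner_integrable hs w).norm (by simpa only [sub_zero] using
      integrable_stdPDF) fun h => ?_
    rw [Real.norm_eq_abs, abs_mul, abs_of_pos (stdPDF_pos _)]
    nlinarith [abs_two_cdf (w * s (|h|/w)), stdPDF_pos (h - 0),
      abs_nonneg (2 * stdCDF (w * s (|h| / w)) - 1)]
  refine h2.trans ?_
  simp only [sub_zero]
  rw [integral_stdPDF]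

lemma outer_integrable (hm : 0 < m) (hs : Measurable s) :
    IntegrableOn (fun w => (∫ h, (2 * stdCDF (w * s (|h| / w)) - 1) * stdPDF (h - 0)) * fW m w)
      (Ioi 0) := by
  refine Integrable.mono (integrable_fW hm) ?_ ?_
  · exact (((Fmeas hs).aestronglyMeasurable.integral_prod_right').mul
      (measurable_fW m).aestronglyMeasurable.restrict)
  · filter_upwards [ae_restrict_mem measurableSet_Ioi] with w hw
    rw [Real.norm_eq_abs, Real.norm_eq_abs, abs_mul]
    have h1 := inner_bound hs w
    have h2 : |fW m w| = fW m w := abs_of_nonneg (fW_nonneg hm w (le_of_lt hw))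
    rw [h2]
    nlinarith [abs_nonneg (fW m w), fW_nonneg hm w (le_of_lt hw),
      abs_nonneg (∫ h, (2 * stdCDF (w * s (|h| / w)) - 1) * stdPDF (h - 0))]

lemma cov0_mono (hm : 0 < m) {s₁ s₂ : ℝ → ℝ} (h1 : Measurable s₁) (h2 : Measurable s₂)
    (hle : ∀ x, 0 ≤ x → s₁ x ≤ s₂ x) : cov0 m s₁ 0 ≤ cov0 m s₂ 0 := by
  unfold cov0
  refine setIntegral_mono_on (outer_integrable hm h1) (outer_integrable hm h2)
    measurableSet_Ioi fun w hw => ?_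
  have hw' : (0:ℝ) < w := hw
  refine mul_le_mul_of_nonneg_right ?_ (fW_nonneg hm w hw'.le)
  refine integral_mono (inner_integrable h1 w) (inner_integrable h2 w) fun h => ?_
  refine mul_le_mul_of_nonneg_right ?_ (stdPDF_pos _).le
  have hs12 : s₁ (|h|/w) ≤ s₂ (|h|/w) := hle _ (by positivity)
  have : w * s₁ (|h|/w) ≤ w * s₂ (|h|/w) := by nlinarith
  have := stdCDF_mono this
  linarith

lemma cov0_const (c : ℝ) :
    cov0 m (fun _ => c) 0 = ∫ w in Ioi (0:ℝ), (2 * stdCDF (w * c) - 1) * fW m w := by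
  unfold cov0
  refine setIntegral_congr_fun measurableSet_Ioi fun w _ => ?_
  congr 1
  rw [integral_const_mul]
  simp only [sub_zero]
  rw [integral_stdPDF, mul_one]

lemma const_integrable (hm : 0 < m) (c : ℝ) (hc : 0 ≤ c) :
    IntegrableOn (fun w => (2 * stdCDF (w * c) - 1) * fW m w) (Ioi 0) := by
  refine Integrable.mono (integrable_fW hm) ?_ ?_
  · exact (((measurable_const.mul (measurable_stdCDF.comp (measurable_id.mul_const c))).sub
      measurable_const).mul (measurable_fW m)).aestronglyMeasurable.restrict
  · filter_upwards [ae_restrict_mem measurableSet_Ioi] with w hw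
    have hw' : (0:ℝ) < w := hw
    rw [Real.norm_eq_abs, Real.norm_eq_abs, abs_mul,
      abs_of_nonneg (fW_nonneg hm w hw'.le)]
    nlinarith [abs_two_cdf (w * c), fW_nonneg hm w hw'.le, abs_nonneg (2 * stdCDF (w*c) - 1)]

lemma cov0_const_diff_le (hm : 0 < m) {c₁ c₂ : ℝ} (h0 : 0 ≤ c₁) (h12 : c₁ ≤ c₂) :
    cov0 m (fun _ => c₂) 0 - cov0 m (fun _ => c₁) 0
      ≤ (c₂ - c₁) * (2 * (Real.sqrt (2 * Real.pi))⁻¹) := by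
  rw [cov0_const, cov0_const,
    ← integral_sub (const_integrable hm c₂ (h0.trans h12)) (const_integrable hm c₁ h0)]
  have hstep : ∀ w ∈ Ioi (0:ℝ),
      (2 * stdCDF (w * c₂) - 1) * fW m w - (2 * stdCDF (w * c₁) - 1) * fW m w
        ≤ ((c₂ - c₁) * (2 * (Real.sqrt (2 * Real.pi))⁻¹)) * (w * fW m w) := by
    intro w hw
    have hw' : (0:ℝ) < w := hw
    have hc12 : w * c₁ ≤ w * c₂ := by nlinarith
    have hdiff : stdCDF (w * c₂) - stdCDF (w * c₁)
        ≤ (Real.sqrt (2 * Real.pi))⁻¹ * (w * c₂ - w * c₁) := by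
      rw [stdCDF_sub_eq _ _ hc12]
      have hle : ∫ x in Ioo (w*c₁) (w*c₂), stdPDF x
          ≤ ∫ _x in Ioo (w*c₁) (w*c₂), (Real.sqrt (2 * Real.pi))⁻¹ := by
        refine setIntegral_mono_on integrable_stdPDF.integrableOn
          ((integrableOn_const_iff (C := (Real.sqrt (2 * Real.pi))⁻¹)).mpr (Or.inr (by rw [Real.volume_Ioo]; exact ENNReal.ofReal_lt_top)))
          measurableSet_Ioo fun x _ => stdPDF_le x
      refine hle.trans ?_
      rw [setIntegral_const, Real.volume_real_Ioo_of_le hc12, smul_eq_mul]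
      ring_nf
      exact le_refl _
    have hfw := fW_nonneg hm w hw'.le
    calc (2 * stdCDF (w * c₂) - 1) * fW m w - (2 * stdCDF (w * c₁) - 1) * fW m w
        = 2 * (stdCDF (w * c₂) - stdCDF (w * c₁)) * fW m w := by ring
      _ ≤ 2 * ((Real.sqrt (2 * Real.pi))⁻¹ * (w * c₂ - w * c₁)) * fW m w := by nlinarith
      _ = ((c₂ - c₁) * (2 * (Real.sqrt (2 * Real.pi))⁻¹)) * (w * fW m w) := by ring
  have hInt2 : IntegrableOn
      (fun w => ((c₂ - c₁) * (2 * (Real.sqrt (2 * Real.pi))⁻¹)) * (w * fW m w)) (Ioi 0) :=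
    (integrable_w_fW hm).const_mul _
  have hmono := setIntegral_mono_on
    ((const_integrable hm c₂ (h0.trans h12)).sub (const_integrable hm c₁ h0))
    hInt2 measurableSet_Ioi hstep
  refine hmono.trans ?_
  rw [integral_const_mul]
  have hc : 0 ≤ (c₂ - c₁) * (2 * (Real.sqrt (2 * Real.pi))⁻¹) := mul_nonneg (by linarith) (by positivity)
  nlinarith [integral_w_fW_le hm, hc]
end covlemmas


section tails
variable {m : ℕ}

lemma tPDF_pos (hm : 0 < m) (x : ℝ) : 0 < tPDF m x := by
  have hmr := mr_pos hm
  unfold tPDF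
  have h1 : 0 < Real.Gamma (((m:ℝ)+1)/2) := Real.Gamma_pos_of_pos (by positivity)
  have h2 : 0 < Real.Gamma ((m:ℝ)/2) := Real.Gamma_pos_of_pos (by positivity)
  have h3 : (0:ℝ) < 1 + x^2/(m:ℝ) := by positivity
  have h4 : (0:ℝ) < (1 + x^2/(m:ℝ)) ^ (-(((m:ℝ)+1)/2)) := Real.rpow_pos_of_pos h3 _
  positivity

lemma continuous_tPDF (hm : 0 < m) : Continuous (tPDF m) := by
  have hmr := mr_pos hm
  unfold tPDF
  refine Continuous.mul continuous_const ?_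
  refine Continuous.rpow_const ?_ fun x => Or.inl ?_
  · fun_prop
  · positivity

lemma integrableOn_tPDF (hm : 0 < m) (a b : ℝ) : IntegrableOn (tPDF m) (Ioo a b) :=
  ((continuous_tPDF hm).integrableOn_Ioc).mono_set Ioo_subset_Ioc_self

lemma tPDF_lb (hm2 : 2 ≤ m) (T x : ℝ) (hx : |x| ≤ T) :
    Real.sqrt (1 - 1/(m:ℝ)) * Real.exp (-(T^2/(m:ℝ))/2) * stdPDF x ≤ tPDF m x := by
  have hm : 0 < m := by omega
  have hmr := mr_pos hm
  have hmr2 : (2:ℝ) ≤ (m:ℝ) := by exact_mod_cast hm2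
  have hG2 : 0 < Real.Gamma ((m:ℝ)/2) := Real.Gamma_pos_of_pos (by positivity)
  have hratio : Real.sqrt (((m:ℝ)-1)/2) * Real.Gamma ((m:ℝ)/2)
      ≤ Real.Gamma (((m:ℝ)+1)/2) := by
    have h := Gamma_ratio_ge ((m:ℝ)/2) (by rw [lt_div_iff₀ (by norm_num : (0:ℝ) < 2)]; linarith)
    rw [show (m:ℝ)/2 - 1/2 = ((m:ℝ)-1)/2 by ring,
      show (m:ℝ)/2 + 1/2 = ((m:ℝ)+1)/2 by ring] at h
    exact h
  have hconst : Real.sqrt (1 - 1/(m:ℝ)) * (Real.sqrt (2*Real.pi))⁻¹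
      ≤ Real.Gamma (((m:ℝ)+1)/2) / (Real.sqrt ((m:ℝ) * Real.pi) * Real.Gamma ((m:ℝ)/2)) := by
    have hme : (0:ℝ) ≤ 1 - 1/(m:ℝ) := by
      have : (1:ℝ)/(m:ℝ) ≤ 1/2 := by
        rw [div_le_div_iff₀ hmr (by norm_num)]; linarith
      linarith
    have hEq : Real.sqrt (1 - 1/(m:ℝ)) * (Real.sqrt (2*Real.pi))⁻¹
        = Real.sqrt (((m:ℝ)-1)/2) / Real.sqrt ((m:ℝ) * Real.pi) := by
      calc Real.sqrt (1 - 1/(m:ℝ)) * (Real.sqrt (2*Real.pi))⁻¹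
          = Real.sqrt ((1 - 1/(m:ℝ)) * (2*Real.pi)⁻¹) := by
            rw [← Real.sqrt_inv, ← Real.sqrt_mul hme]
        _ = Real.sqrt ((((m:ℝ)-1)/2) * (((m:ℝ) * Real.pi))⁻¹) := by
            congr 1
            rw [mul_inv, mul_inv]
            have hpi := Real.pi_ne_zero
            field_simp
        _ = Real.sqrt (((m:ℝ)-1)/2) / Real.sqrt ((m:ℝ) * Real.pi) := by
            rw [Real.sqrt_mul (by linarith), Real.sqrt_inv]
            ring
    rw [hEq, div_le_div_iff₀ (by positivity) (by positivity)]
    calc Real.sqrt (((m:ℝ)-1)/2) * (Real.sqrt ((m:ℝ)*Real.pi) * Real.Gamma ((m:ℝ)/2))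
        = (Real.sqrt (((m:ℝ)-1)/2) * Real.Gamma ((m:ℝ)/2)) * Real.sqrt ((m:ℝ)*Real.pi) := by
          ring
      _ ≤ Real.Gamma (((m:ℝ)+1)/2) * Real.sqrt ((m:ℝ)*Real.pi) :=
          mul_le_mul_of_nonneg_right hratio (Real.sqrt_nonneg _)
  have hP : (0:ℝ) < 1 + x^2/(m:ℝ) := by positivity
  have hexp : Real.exp (-(T^2/(m:ℝ))/2) * Real.exp (-x^2/2)
      ≤ (1 + x^2/(m:ℝ)) ^ (-(((m:ℝ)+1)/2)) := by
    rw [Real.rpow_def_of_pos hP, ← Real.exp_add,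
      mul_comm (Real.log (1 + x^2/(m:ℝ))) (-(((m:ℝ)+1)/2))]
    refine Real.exp_le_exp.mpr ?_
    have hlog : Real.log (1 + x^2/(m:ℝ)) ≤ x^2/(m:ℝ) := by
      have := Real.log_le_sub_one_of_pos hP
      linarith
    have hxT : x^2 ≤ T^2 := by
      have h1 : |x|^2 ≤ T^2 := by nlinarith [abs_nonneg x, hx]
      rwa [sq_abs] at h1
    have hkey : -(((m:ℝ)+1)/2) * (x^2/(m:ℝ)) ≤ -(((m:ℝ)+1)/2) * Real.log (1 + x^2/(m:ℝ)) := by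
      nlinarith [hlog]
    have hu : (m:ℝ) * (x^2/(m:ℝ)) = x^2 := by field_simp
    have hab : x^2/(m:ℝ) ≤ T^2/(m:ℝ) := by
      rw [div_le_div_iff₀ hmr hmr]
      nlinarith
    nlinarith [hkey, hu, hab]
  have hA : (0:ℝ) ≤ Real.sqrt (1 - 1/(m:ℝ)) * (Real.sqrt (2*Real.pi))⁻¹ := by positivity
  calc Real.sqrt (1 - 1/(m:ℝ)) * Real.exp (-(T^2/(m:ℝ))/2) * stdPDF x
      = (Real.sqrt (1 - 1/(m:ℝ)) * (Real.sqrt (2*Real.pi))⁻¹) *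
        (Real.exp (-(T^2/(m:ℝ))/2) * Real.exp (-x^2/2)) := by
        unfold stdPDF; ring
    _ ≤ (Real.Gamma (((m:ℝ)+1)/2) / (Real.sqrt ((m:ℝ) * Real.pi) * Real.Gamma ((m:ℝ)/2))) *
        ((1 + x^2/(m:ℝ)) ^ (-(((m:ℝ)+1)/2))) :=
        mul_le_mul hconst hexp (by positivity) (hA.trans hconst)
    _ = tPDF m x := rfl

lemma mass_lb (hm2 : 2 ≤ m) {T : ℝ} (hT : 0 ≤ T) :
    Real.sqrt (1 - 1/(m:ℝ)) * Real.exp (-(T^2/(m:ℝ))/2) * (2 * stdCDF T - 1)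
      ≤ ∫ x in Ioo (-T) T, tPDF m x := by
  have hm : 0 < m := by omega
  rw [two_stdCDF_sub_one T hT, ← integral_const_mul]
  refine setIntegral_mono_on ?_ (integrableOn_tPDF hm _ _) measurableSet_Ioo fun x hx => ?_
  · exact (integrable_stdPDF.const_mul _).integrableOn
  · refine tPDF_lb hm2 T x ?_
    rw [abs_le]
    exact ⟨by linarith [hx.1], by linarith [hx.2]⟩

lemma exists_T (α : ℝ) (hα : α ∈ Set.Ioo (0:ℝ) 1) :
    ∃ T : ℝ, 0 < T ∧ 1 - α < 2 * stdCDF T - 1 := by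
  have htend : Tendsto (fun n : ℕ => stdCDF (n:ℝ)) atTop (nhds 1) := by
    have h1 : Tendsto (fun n : ℕ => ∫ x in Iic ((n:ℝ)), stdPDF x) atTop
        (nhds (∫ x in ⋃ n : ℕ, Iic ((n:ℝ)), stdPDF x)) := by
      refine tendsto_setIntegral_of_monotone (fun n => measurableSet_Iic)
        (fun i j hij => Iic_subset_Iic.mpr (by exact_mod_cast hij)) ?_
      exact integrable_stdPDF.integrableOn
    have h2 : (⋃ n : ℕ, Iic ((n:ℝ))) = univ := by
      refine eq_univ_of_forall fun x => ?_
      obtain ⟨n, hn⟩ := exists_nat_ge x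
      exact mem_iUnion.mpr ⟨n, hn⟩
    rw [h2] at h1
    have h3 : ∫ x in (univ : Set ℝ), stdPDF x = 1 := by
      rw [setIntegral_univ, integral_stdPDF]
    rw [h3] at h1
    exact h1
  have hev := htend.eventually (eventually_gt_nhds (show 1 - α/2 < 1 by
    have := hα.1; linarith))
  obtain ⟨n, hn⟩ := hev.exists
  refine ⟨(n:ℝ) + 1, by positivity, ?_⟩
  have hmono := stdCDF_mono (show (n:ℝ) ≤ (n:ℝ) + 1 by linarith)
  have := hα.1
  linarith

lemma eventually_tm_le (α : ℝ) (hα : α ∈ Set.Ioo (0:ℝ) 1) (tm : ℕ → ℝ)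
    (htm : ∀ m : ℕ, 0 < m → 0 < tm m ∧ ∫ x in Set.Ioo (-(tm m)) (tm m), tPDF m x = 1 - α) :
    ∃ T : ℝ, 0 < T ∧ ∀ᶠ m : ℕ in atTop, tm m ≤ T := by
  obtain ⟨T, hT0, hTL⟩ := exists_T α hα
  set L := 2 * stdCDF T - 1 with hL
  have ha : Tendsto (fun m : ℕ =>
      Real.sqrt (1 - 1/(m:ℝ)) * Real.exp (-(T^2/(m:ℝ))/2)) atTop (nhds 1) := by
    have h0 : Tendsto (fun n : ℕ => 1/(n:ℝ)) atTop (nhds 0) :=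
      tendsto_one_div_atTop_nhds_zero_nat
    have h1 : Tendsto (fun n : ℕ => Real.sqrt (1 - 1/(n:ℝ))) atTop (nhds 1) := by
      have hsub : Tendsto (fun n : ℕ => 1 - 1/(n:ℝ)) atTop (nhds 1) := by
        simpa using tendsto_const_nhds.sub h0
      have := (Real.continuous_sqrt.tendsto 1).comp hsub
      rwa [Real.sqrt_one] at this
    have h2 : Tendsto (fun n : ℕ => Real.exp (-(T^2/(n:ℝ))/2)) atTop (nhds 1) := by
      have h3 : Tendsto (fun n : ℕ => -(T^2/(n:ℝ))/2) atTop (nhds 0) := by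
        have := h0.const_mul (-T^2/2)
        simp only [mul_zero] at this
        refine this.congr fun n => ?_
        ring
      have := (Real.continuous_exp.tendsto 0).comp h3
      rwa [Real.exp_zero] at this
    have := h1.mul h2
    simpa using this
  have hprod : Tendsto (fun m : ℕ =>
      Real.sqrt (1 - 1/(m:ℝ)) * Real.exp (-(T^2/(m:ℝ))/2) * L) atTop (nhds L) := by
    have := ha.mul_const L
    simpa using this
  have hev1 := hprod.eventually (eventually_gt_nhds hTL)
  refine ⟨T, hT0, ?_⟩
  filter_upwards [hev1, eventually_ge_atTop 2] with m hm1 hm2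
  by_contra hcon
  push_neg at hcon
  have hm : 0 < m := by omega
  obtain ⟨htm0, htmint⟩ := htm m hm
  have hle : ∫ x in Ioo (-T) T, tPDF m x ≤ ∫ x in Ioo (-(tm m)) (tm m), tPDF m x := by
    refine setIntegral_mono_set (integrableOn_tPDF hm _ _)
      (Filter.Eventually.of_forall fun x => (tPDF_pos hm x).le)
      (Filter.Eventually.of_forall ?_)
    exact Ioo_subset_Ioo (by linarith) (by linarith)
  have hmass := mass_lb hm2 hT0.le
  rw [htmint] at hle
  linarith

lemma sqrt_one_add_le (y : ℝ) (hy : 0 ≤ y) : Real.sqrt (1 + y) ≤ 1 + y/2 := by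
  rw [show (1:ℝ) + y/2 = Real.sqrt ((1 + y/2)^2) from (Real.sqrt_sq (by linarith)).symm]
  exact Real.sqrt_le_sqrt (by nlinarith)

lemma one_le_sqrt_one_add (y : ℝ) (hy : 0 ≤ y) : (1:ℝ) ≤ Real.sqrt (1 + y) := by
  have h := Real.sqrt_le_sqrt (show (1:ℝ) ≤ 1 + y by linarith)
  rwa [Real.sqrt_one] at h

lemma measurable_smin (m : ℕ) (t d : ℝ) : Measurable (smin m t d) := by
  unfold smin
  refine Measurable.ite (measurableSet_lt measurable_id measurable_const) ?_ measurable_const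
  fun_prop

lemma part1 (α : ℝ) (d : ℝ) (hd : 0 < d) (tm : ℕ → ℝ)
    (htm : ∀ m : ℕ, 0 < m → 0 < tm m ∧ ∫ x in Set.Ioo (-(tm m)) (tm m), tPDF m x = 1 - α)
    (m : ℕ) (hm : 0 < m) :
    0 ≤ cov0 m (smin m (tm m) d) 0 - (1 - α) ∧
      cov0 m (smin m (tm m) d) 0 - (1 - α)
        ≤ cov0 m (fun _ => Real.sqrt (1 + d ^ 2 / m) * tm m) 0 - (1 - α) := by
  obtain ⟨ht0, htint⟩ := htm m hm
  have hmr := mr_pos hm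
  have hlo : ∀ x, 0 ≤ x → (fun _ : ℝ => tm m) x ≤ smin m (tm m) d x := by
    intro x hx
    unfold smin
    split_ifs with h
    · have h1 : (1:ℝ) ≤ Real.sqrt (1 + x^2/(m:ℝ)) := by
        refine one_le_sqrt_one_add _ (by positivity)
      nlinarith
    · exact le_refl _
  have hhi : ∀ x, 0 ≤ x → smin m (tm m) d x ≤ Real.sqrt (1 + d^2/(m:ℝ)) * tm m := by
    intro x hx
    unfold smin
    split_ifs with h
    · have h1 : Real.sqrt (1 + x^2/(m:ℝ)) ≤ Real.sqrt (1 + d^2/(m:ℝ)) := by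
        refine Real.sqrt_le_sqrt ?_
        have : x^2 ≤ d^2 := by nlinarith
        have h2 : x^2/(m:ℝ) ≤ d^2/(m:ℝ) := by
          rw [div_le_div_iff₀ hmr hmr]; nlinarith
        linarith
      nlinarith
    · have h1 : (1:ℝ) ≤ Real.sqrt (1 + d^2/(m:ℝ)) :=
        one_le_sqrt_one_add _ (by positivity)
      nlinarith
  have hbase : cov0 m (fun _ => tm m) 0 = 1 - α := by
    rw [cov0_const, keyA hm ht0, htint]
  constructor
  · have := cov0_mono hm measurable_const (measurable_smin m (tm m) d) hlo
    rw [hbase] at this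
    linarith
  · have := cov0_mono hm (measurable_smin m (tm m) d) measurable_const hhi
    linarith


theorem stmt12 (α : ℝ) (hα : α ∈ Set.Ioo (0 : ℝ) 1) (d : ℝ) (hd : 0 < d)
    (tm : ℕ → ℝ)
    (htm : ∀ m : ℕ, 0 < m → 0 < tm m ∧ ∫ x in Set.Ioo (-(tm m)) (tm m), tPDF m x = 1 - α) :
    (∀ m : ℕ, 0 < m →
        0 ≤ cov0 m (smin m (tm m) d) 0 - (1 - α) ∧
          cov0 m (smin m (tm m) d) 0 - (1 - α)
            ≤ cov0 m (fun _ => Real.sqrt (1 + d ^ 2 / m) * tm m) 0 - (1 - α)) ∧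
      Tendsto (fun m : ℕ => cov0 m (smin m (tm m) d) 0 - (1 - α)) atTop (nhds 0) := by
  refine ⟨fun m hm => part1 α d hd tm htm m hm, ?_⟩
  obtain ⟨T, hT0, hevT⟩ := eventually_tm_le α hα tm htm
  set C : ℝ := d^2 * T * (2 * (Real.sqrt (2*Real.pi))⁻¹) / 2 with hC
  have hCpos : 0 ≤ C := by positivity
  have hlow : ∀ᶠ m : ℕ in atTop, 0 ≤ cov0 m (smin m (tm m) d) 0 - (1 - α) := by
    filter_upwards [eventually_ge_atTop 1] with m hm1
    exact (part1 α d hd tm htm m (by omega)).1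
  have hup : ∀ᶠ m : ℕ in atTop,
      cov0 m (smin m (tm m) d) 0 - (1 - α) ≤ C * (1/(m:ℝ)) := by
    filter_upwards [hevT, eventually_ge_atTop 1] with m hmT hm1
    have hm : 0 < m := by omega
    have hmr := mr_pos hm
    obtain ⟨ht0, htint⟩ := htm m hm
    have hbase : cov0 m (fun _ => tm m) 0 = 1 - α := by
      rw [cov0_const, keyA hm ht0, htint]
    have h2 := (part1 α d hd tm htm m hm).2
    have h1le : tm m ≤ Real.sqrt (1 + d^2/(m:ℝ)) * tm m := by
      have h1 : (1:ℝ) ≤ Real.sqrt (1 + d^2/(m:ℝ)) :=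
        one_le_sqrt_one_add _ (by positivity)
      nlinarith
    have hdiff := cov0_const_diff_le hm ht0.le h1le
    have hgap : Real.sqrt (1 + d^2/(m:ℝ)) * tm m - tm m ≤ d^2/(2*(m:ℝ)) * T := by
      have hs := sqrt_one_add_le (d^2/(m:ℝ)) (by positivity)
      have hfac : Real.sqrt (1 + d^2/(m:ℝ)) * tm m - tm m
          = (Real.sqrt (1 + d^2/(m:ℝ)) - 1) * tm m := by ring
      rw [hfac]
      have h3 : Real.sqrt (1 + d^2/(m:ℝ)) - 1 ≤ d^2/(2*(m:ℝ)) := by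
        have : d^2/(m:ℝ)/2 = d^2/(2*(m:ℝ)) := by ring
        linarith [hs, this]
      have h4 : (0:ℝ) ≤ d^2/(2*(m:ℝ)) := by positivity
      nlinarith [ht0, hmT, Real.sqrt_nonneg (1 + d^2/(m:ℝ)),
        (show (0:ℝ) ≤ Real.sqrt (1 + d^2/(m:ℝ)) - 1 by nlinarith [h1le, ht0])]
    have hCm : d^2/(2*(m:ℝ)) * T * (2 * (Real.sqrt (2*Real.pi))⁻¹) = C * (1/(m:ℝ)) := by
      rw [hC]; field_simp
    have hc0 : (0:ℝ) ≤ 2 * (Real.sqrt (2*Real.pi))⁻¹ := by positivity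
    calc cov0 m (smin m (tm m) d) 0 - (1 - α)
        ≤ cov0 m (fun _ => Real.sqrt (1 + d^2/(m:ℝ)) * tm m) 0 - (1 - α) := by
          convert h2 using 4 <;> norm_num
      _ = cov0 m (fun _ => Real.sqrt (1 + d^2/(m:ℝ)) * tm m) 0
          - cov0 m (fun _ => tm m) 0 := by rw [hbase]
      _ ≤ (Real.sqrt (1 + d^2/(m:ℝ)) * tm m - tm m) * (2 * (Real.sqrt (2*Real.pi))⁻¹) :=
          hdiff
      _ ≤ d^2/(2*(m:ℝ)) * T * (2 * (Real.sqrt (2*Real.pi))⁻¹) := by nlinarith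
      _ = C * (1/(m:ℝ)) := hCm
  have htendu : Tendsto (fun m : ℕ => C * (1/(m:ℝ))) atTop (nhds 0) := by
    have := tendsto_one_div_atTop_nhds_zero_nat.const_mul C
    simpa using this
  exact tendsto_of_tendsto_of_tendsto_of_le_of_le' tendsto_const_nhds htendu hlow hup
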